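/- arXiv:2112.11546 — 3 statements merged into one kernel-verified Lean document; each statement's English description precedes it below -/
import Mathlib

section
/- Preservation theorem for join abstraction: let F = (I, trans, K, δ) be a featured transition system over state type S and let Φ be any linear-time property over S. If the join abstraction satisfies Φ, i.e. α_K(F) ⊨ Φ, then F ⊨ Φ, i.e. π_k(F) ⊨ Φ for every k ∈ K. -/
/-- The set of paths of a transition system `(I, trans)`. -/
def Paths {S : Type*} (I : Set S) (trans : Set (S × S)) : Set (ℕ → S) :=
  {ρ | ρ 0 ∈ I ∧ ∀ i, (ρ i, ρ (i + 1)) ∈ trans}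

/-- Preservation theorem for the join abstraction: if `α_K(F) ⊨ Φ` for a
linear-time property `Φ`, then `π_k(F) ⊨ Φ` for every `k ∈ K`, i.e. `F ⊨ Φ`. -/
theorem join_abstraction_preservation {S Conf : Type*}
    (I : Set S) (trans : Set (S × S)) (K : Set Conf) (δ : S × S → Set Conf)
    (Φ : Set (ℕ → S))
    (h : Paths I {t ∈ trans | ∃ k ∈ K, k ∈ δ t} ⊆ Φ) :
    ∀ k ∈ K, Paths I {t ∈ trans | k ∈ δ t} ⊆ Φ := by
  intro k hk ρ hρ
  exact h ⟨hρ.1, fun i => ⟨(hρ.2 i).1, k, hk, (hρ.2 i).2⟩⟩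
end

section
/- Partition decomposition of lifted model checking: let F = (I, trans, K, δ) be a featured transition system over state type S, let Φ be a linear-time property over S, and let K₁, …, Kₙ be a partition of K (the Kᵢ are pairwise disjoint and their union is K). Then F ⊨ Φ if and only if π_{Kᵢ}(F) ⊨ Φ for every i ∈ {1, …, n}. -/
/-- Partition decomposition of lifted model checking: if `K₁, …, Kₙ` partition
`K`, then `F ⊨ Φ` iff `π_{Kᵢ}(F) ⊨ Φ` for every `i`. -/
theorem partition_decomposition {S Conf : Type*}
    (I : Set S) (trans : Set (S × S)) (K : Set Conf) (δ : S × S → Set Conf)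
    (Φ : Set (ℕ → S)) (n : ℕ) (Ks : Fin n → Set Conf)
    (hdisj : ∀ i j, i ≠ j → Disjoint (Ks i) (Ks j))
    (hunion : (⋃ i, Ks i) = K) :
    (∀ k ∈ K, Paths I {t ∈ trans | k ∈ δ t} ⊆ Φ) ↔
    (∀ i, ∀ k ∈ Ks i,
      Paths I {t ∈ {t ∈ trans | ∃ k' ∈ Ks i, k' ∈ δ t} | k ∈ δ t} ⊆ Φ) := by
  have hset : ∀ (i : Fin n), ∀ k ∈ Ks i,
      {t ∈ {t ∈ trans | ∃ k' ∈ Ks i, k' ∈ δ t} | k ∈ δ t} = {t ∈ trans | k ∈ δ t} := by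
    intro i k hk
    ext t
    constructor
    · rintro ⟨⟨ht, -⟩, hd⟩; exact ⟨ht, hd⟩
    · rintro ⟨ht, hd⟩; exact ⟨⟨ht, ⟨k, hk, hd⟩⟩, hd⟩
  constructor
  · intro h i k hk
    rw [hset i k hk]
    exact h k (hunion ▸ Set.mem_iUnion.mpr ⟨i, hk⟩)
  · intro h k hk
    obtain ⟨i, hi⟩ := Set.mem_iUnion.mp (hunion ▸ hk)
    rw [← hset i k hi]
    exact h i k hi
end

section
/- Soundness of blockwise abstraction: let F = (I, trans, K, δ) be a featured transition system over state type S, let Φ be a linear-time property over S, and let K₁, …, Kₙ be a partition of K (pairwise disjoint with union K). If α_{Kᵢ}(π_{Kᵢ}(F)) ⊨ Φ for every i ∈ {1, …, n}, then F ⊨ Φ. Moreover, for any single block Kⱼ, if α_{Kⱼ}(π_{Kⱼ}(F)) ⊨ Φ then π_k(F) ⊨ Φ for every k ∈ Kⱼ. -/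
/-- Soundness of blockwise abstraction: if `K₁, …, Kₙ` partition `K` and
`α_{Kᵢ}(π_{Kᵢ}(F)) ⊨ Φ` for every `i`, then `F ⊨ Φ`.  Moreover, for any single
block `Kⱼ`, `α_{Kⱼ}(π_{Kⱼ}(F)) ⊨ Φ` implies `π_k(F) ⊨ Φ` for every `k ∈ Kⱼ`. -/
theorem blockwise_abstraction_sound {S Conf : Type*}
    (I : Set S) (trans : Set (S × S)) (K : Set Conf) (δ : S × S → Set Conf)
    (Φ : Set (ℕ → S)) (n : ℕ) (Ks : Fin n → Set Conf)
    (hdisj : ∀ i j, i ≠ j → Disjoint (Ks i) (Ks j))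
    (hunion : (⋃ i, Ks i) = K) :
    ((∀ i, Paths I
        {t ∈ {t ∈ trans | ∃ k ∈ Ks i, k ∈ δ t} | ∃ k ∈ Ks i, k ∈ δ t} ⊆ Φ) →
      ∀ k ∈ K, Paths I {t ∈ trans | k ∈ δ t} ⊆ Φ) ∧
    (∀ j, (Paths I
        {t ∈ {t ∈ trans | ∃ k ∈ Ks j, k ∈ δ t} | ∃ k ∈ Ks j, k ∈ δ t} ⊆ Φ) →
      ∀ k ∈ Ks j, Paths I {t ∈ trans | k ∈ δ t} ⊆ Φ) := by
  have key : ∀ j, (Paths I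
        {t ∈ {t ∈ trans | ∃ k ∈ Ks j, k ∈ δ t} | ∃ k ∈ Ks j, k ∈ δ t} ⊆ Φ) →
      ∀ k ∈ Ks j, Paths I {t ∈ trans | k ∈ δ t} ⊆ Φ := by
    intro j h k hk ρ hρ
    apply h
    exact ⟨hρ.1, fun i => ⟨⟨(hρ.2 i).1, k, hk, (hρ.2 i).2⟩, k, hk, (hρ.2 i).2⟩⟩
  refine ⟨fun h k hk => ?_, key⟩
  rw [← hunion] at hk
  obtain ⟨_, ⟨i, rfl⟩, hki⟩ := hk
  exact key i (h i) k hki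
end
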